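/- For every n ≥ 1, there exists an invertible matrix x ∈ M_n(ℂ) such that x and its transpose xᵀ together generate M_n(ℂ) as a unital ℂ-algebra. -/

import Mathlib

open Matrix

private def Emat (n : ℕ) : Matrix (Fin n) (Fin n) ℂ :=
  Matrix.of fun i j => if (i : ℕ) + 1 = (j : ℕ) then 1 else 0

private lemma Emat_pow (n k : ℕ) (i j : Fin n) :
    (Emat n ^ k) i j = if (i : ℕ) + k = (j : ℕ) then 1 else 0 := by
  induction k generalizing j with
  | zero => simp [Matrix.one_apply, Fin.ext_iff, eq_comm]
  | succ k ih =>
    rw [pow_succ, Matrix.mul_apply]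
    have hEdef : ∀ c d : Fin n, Emat n c d = if (c : ℕ) + 1 = (d : ℕ) then 1 else 0 :=
      fun _ _ => rfl
    simp only [ih, hEdef, ite_mul, one_mul, zero_mul]
    by_cases h : (i : ℕ) + k < n
    · rw [Finset.sum_eq_single (⟨(i : ℕ) + k, h⟩ : Fin n)]
      · simp only [if_pos rfl]
        rw [add_assoc]
        simp
      · intro c _ hc
        rw [if_neg]
        intro hcontra
        exact hc (Fin.ext hcontra.symm)
      · simp
    · rw [Finset.sum_eq_zero, if_neg (by omega)]
      intro c _
      rw [if_neg]
      have := c.isLt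
      omega

private lemma Emat_nilpotent (n : ℕ) : (Emat n) ^ n = 0 := by
  ext i j
  rw [Emat_pow]
  have := j.isLt
  have := i.isLt
  simp only [Matrix.zero_apply]
  rw [if_neg (by omega)]

private lemma step (n : ℕ) (hn : 1 ≤ n) (i : Fin n) :
    (Emat n)ᵀ ^ (i : ℕ) * Emat n ^ (n - 1) =
      Matrix.single i ⟨n - 1, by omega⟩ (1 : ℂ) := by
  ext a b
  rw [Matrix.mul_apply]
  have h1 : ∀ c : Fin n, ((Emat n)ᵀ ^ (i : ℕ)) a c = if (c : ℕ) + i = (a : ℕ) then 1 else 0 := by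
    intro c
    rw [← Matrix.transpose_pow, Matrix.transpose_apply, Emat_pow]
  simp only [h1, Emat_pow, ite_mul, one_mul, zero_mul]
  rw [Finset.sum_eq_single (⟨0, hn⟩ : Fin n)]
  · have ha := a.isLt
    have hb := b.isLt
    simp only [Matrix.single, Matrix.of_apply, Fin.ext_iff]
    split_ifs <;> first | rfl | omega
  · intro c _ hc
    have hc0 : (c : ℕ) ≠ 0 := fun h => hc (Fin.ext h)
    have hb := b.isLt
    split_ifs with h1 h2
    · omega
    · rfl
    · rfl
  · simp

private lemma stdBasisMatrix_transpose' (n : ℕ) (i j : Fin n) (c : ℂ) :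
    (Matrix.single i j c)ᵀ = Matrix.single j i c := by
  ext a b
  simp [Matrix.single, and_comm]

theorem stmt7 (n : ℕ) (hn : 1 ≤ n) :
    ∃ x : Matrix (Fin n) (Fin n) ℂ, IsUnit x ∧ Algebra.adjoin ℂ {x, xᵀ} = ⊤ := by
  refine ⟨1 + Emat n, IsNilpotent.isUnit_one_add ⟨n, Emat_nilpotent n⟩, ?_⟩
  set x : Matrix (Fin n) (Fin n) ℂ := 1 + Emat n with hxdef
  set A := Algebra.adjoin ℂ {x, xᵀ} with hA
  have hx : x ∈ A := Algebra.subset_adjoin (by simp)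
  have hxt : xᵀ ∈ A := Algebra.subset_adjoin (by simp)
  have hE : Emat n ∈ A := by
    have := A.sub_mem hx (A.one_mem)
    simpa [hxdef] using this
  have hET : (Emat n)ᵀ ∈ A := by
    have := A.sub_mem hxt (A.one_mem)
    simpa [hxdef, Matrix.transpose_add, Matrix.transpose_one] using this
  have hstd : ∀ i j : Fin n, Matrix.single i j (1 : ℂ) ∈ A := by
    intro i j
    have h1 := step n hn i
    have h2 : (Emat n)ᵀ ^ (n - 1) * Emat n ^ (j : ℕ) =
        Matrix.single ⟨n - 1, by omega⟩ j (1 : ℂ) := by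
      have := congrArg Matrix.transpose (step n hn j)
      simp only [Matrix.transpose_mul, Matrix.transpose_pow, Matrix.transpose_transpose,
        stdBasisMatrix_transpose'] at this
      exact this
    have key : Matrix.single i j (1 : ℂ) =
        ((Emat n)ᵀ ^ (i : ℕ) * Emat n ^ (n - 1)) *
          ((Emat n)ᵀ ^ (n - 1) * Emat n ^ (j : ℕ)) := by
      rw [h1, h2, Matrix.single_mul_single_same, one_mul]
    rw [key]
    exact A.mul_mem (A.mul_mem (pow_mem hET _) (pow_mem hE _))
      (A.mul_mem (pow_mem hET _) (pow_mem hE _))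
  rw [eq_top_iff]
  intro m _
  rw [matrix_eq_sum_single m]
  refine Subalgebra.sum_mem A fun i _ => Subalgebra.sum_mem A fun j _ => ?_
  have : Matrix.single i j (m i j) = m i j • Matrix.single i j (1 : ℂ) := by
    rw [smul_single, smul_eq_mul, mul_one]
  rw [this]
  exact A.smul_mem (hstd i j) _
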